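/- Let M ≥ 1 and β₁ ≥ β₂ > 0 and p_max > 0 be real numbers. Then the supremum of R^NOMA(p₁, p₂) = log₂(1 + M·β₁·p₁) + log₂(1 + β₂·p₂ / (1 + β₂·p₁)) over all p₁ ≥ 0, p₂ ≥ 0 with p₁ + p₂ ≤ p_max equals log₂(1 + p_max·β₁·M), and it is attained at (p₁, p₂) = (p_max, 0). -/
import Mathlib


/-- Equation (22): in the two-user case, the supremum of the NOMA sum rate
`R(p₁,p₂) = log₂(1 + M·β₁·p₁) + log₂(1 + β₂·p₂/(1 + β₂·p₁))` over
`{p₁ ≥ 0, p₂ ≥ 0, p₁ + p₂ ≤ p_max}` equals `log₂(1 + p_max·β₁·M)`,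
attained at `(p₁, p₂) = (p_max, 0)`. -/
theorem noma_two_user_max_sum_rate
    (M β₁ β₂ pmax : ℝ) (hM : 1 ≤ M) (hβ₂ : 0 < β₂) (hβ : β₂ ≤ β₁)
    (hpmax : 0 < pmax)
    (R : ℝ → ℝ → ℝ)
    (hR : ∀ p₁ p₂, R p₁ p₂ =
      Real.logb 2 (1 + M * β₁ * p₁) +
      Real.logb 2 (1 + β₂ * p₂ / (1 + β₂ * p₁))) :
    (∀ p₁ p₂, 0 ≤ p₁ → 0 ≤ p₂ → p₁ + p₂ ≤ pmax →
      R p₁ p₂ ≤ Real.logb 2 (1 + pmax * β₁ * M)) ∧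
    R pmax 0 = Real.logb 2 (1 + pmax * β₁ * M) := by
  have hβ₁ : 0 < β₁ := lt_of_lt_of_le hβ₂ hβ
  have hMβ : β₂ ≤ M * β₁ := by nlinarith
  constructor
  · intro p₁ p₂ h1 h2 hsum
    rw [hR]
    have hd : (0:ℝ) < 1 + β₂ * p₁ := by positivity
    have hA : (0:ℝ) < 1 + M * β₁ * p₁ := by nlinarith
    have hB : (0:ℝ) < 1 + β₂ * p₂ / (1 + β₂ * p₁) := by positivity
    have key : (1 + M * β₁ * p₁) * (1 + β₂ * p₂ / (1 + β₂ * p₁)) ≤ 1 + pmax * β₁ * M := by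
      have heq : (1 + M * β₁ * p₁) * (1 + β₂ * p₂ / (1 + β₂ * p₁))
          = ((1 + M * β₁ * p₁) * ((1 + β₂ * p₁) + β₂ * p₂)) / (1 + β₂ * p₁) := by
        field_simp
      rw [heq, div_le_iff₀ hd]
      nlinarith [mul_nonneg (mul_nonneg (le_of_lt (mul_pos (lt_of_lt_of_le hβ₂ hMβ) hβ₂)) h1)
          (sub_nonneg.mpr hsum : (0:ℝ) ≤ pmax - (p₁ + p₂)),
        mul_nonneg (le_of_lt (lt_of_lt_of_le hβ₂ hMβ)) (sub_nonneg.mpr hsum : (0:ℝ) ≤ pmax - (p₁ + p₂)),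
        mul_nonneg (sub_nonneg.mpr hMβ) h2]
    rw [← Real.logb_mul (ne_of_gt hA) (ne_of_gt hB)]
    exact Real.logb_le_logb_of_le one_lt_two (mul_pos hA hB) key
  · rw [hR]
    have : β₂ * 0 / (1 + β₂ * pmax) = 0 := by simp
    rw [this]
    norm_num
    ring_nf
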